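/- Let M = diag(z₁,…,z_N) ∈ M_N(ℂ) with N ≥ 4 and no three z_j collinear. Then for every a ∈ conv{z₁,…,z_N}, the set B(a) = {b ∈ ℂ : diag(a,b) is a compression of M} is nonempty and compact. -/

import Mathlib

open Matrix BigOperators Finset

noncomputable section

/-- Numerical range of a complex matrix. -/
def NumRange {n : ℕ} (M : Matrix (Fin n) (Fin n) ℂ) : Set ℂ :=
  { c | ∃ u : Fin n → ℂ, star u ⬝ᵥ u = 1 ∧ star u ⬝ᵥ M.mulVec u = c }

/-- `C` is a rank-`k` compression of `M`: `C` represents `P_S M |_S` in some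
orthonormal basis of a `k`-dimensional subspace `S`. -/
def IsCompression {N k : ℕ} (M : Matrix (Fin N) (Fin N) ℂ)
    (C : Matrix (Fin k) (Fin k) ℂ) : Prop :=
  ∃ f : Fin k → (Fin N → ℂ),
    (∀ i j, star (f i) ⬝ᵥ f j = if i = j then 1 else 0) ∧
    (∀ i j, C i j = star (f i) ⬝ᵥ M.mulVec (f j))

/-- `diag(a,b)` is a compression of `M`. -/
def IsDiagCompression {N : ℕ} (M : Matrix (Fin N) (Fin N) ℂ) (a b : ℂ) : Prop :=
  ∃ u w : Fin N → ℂ,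
    star u ⬝ᵥ u = 1 ∧ star w ⬝ᵥ w = 1 ∧ star u ⬝ᵥ w = 0 ∧
    star u ⬝ᵥ M.mulVec u = a ∧ star w ⬝ᵥ M.mulVec w = b ∧
    star u ⬝ᵥ M.mulVec w = 0 ∧ star w ⬝ᵥ M.mulVec u = 0

/-- The rank-`k` numerical range `Λ_k(M)`. -/
def rankNumRange {N : ℕ} (k : ℕ) (M : Matrix (Fin N) (Fin N) ℂ) : Set ℂ :=
  { c | ∃ P : Matrix (Fin N) (Fin N) ℂ,
      P.IsHermitian ∧ P * P = P ∧ P.rank = k ∧ P * M * P = c • P }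

/-- `M` has an orthonormal basis of eigenvectors with eigenvalue list `z`. -/
def HasONEigenbasis {N : ℕ} (M : Matrix (Fin N) (Fin N) ℂ) (z : Fin N → ℂ) : Prop :=
  ∃ f : Fin N → (Fin N → ℂ),
    (∀ i j, star (f i) ⬝ᵥ f j = if i = j then 1 else 0) ∧
    (∀ j, M.mulVec (f j) = z j • f j)

variable {N : ℕ}


lemma dot_expand (u w : Fin N → ℂ) :
    star u ⬝ᵥ w = ∑ i, (starRingEnd ℂ) (u i) * w i := by
  simp [dotProduct, Complex.star_def]

lemma diag_dot_expand (z u w : Fin N → ℂ) :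
    star u ⬝ᵥ (Matrix.diagonal z).mulVec w = ∑ i, (starRingEnd ℂ) (u i) * (z i * w i) := by
  simp [dotProduct, Matrix.mulVec_diagonal, Complex.star_def]

lemma norm_le_one_of_unit (u : Fin N → ℂ) (h : star u ⬝ᵥ u = 1) : ‖u‖ ≤ 1 := by
  have hsum : ∑ i, Complex.normSq (u i) = 1 := by
    have h2 : star u ⬝ᵥ u = ((∑ i, Complex.normSq (u i) : ℝ) : ℂ) := by
      rw [dot_expand]; push_cast
      refine Finset.sum_congr rfl fun i _ => ?_
      rw [mul_comm, Complex.mul_conj]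
    rw [h2] at h
    exact_mod_cast h
  have hle : ∀ i, ‖u i‖ ≤ 1 := by
    intro i
    have h1 : Complex.normSq (u i) ≤ 1 := by
      rw [← hsum]
      exact Finset.single_le_sum (fun j _ => Complex.normSq_nonneg _) (Finset.mem_univ i)
    have h2 : ‖u i‖ ^ 2 ≤ 1 := by rw [← Complex.sq_norm] at h1; exact h1
    nlinarith [norm_nonneg (u i)]
  exact pi_norm_le_iff_of_nonneg zero_le_one |>.2 hle


lemma cont_dot : Continuous fun q : (Fin N → ℂ) × (Fin N → ℂ) => star q.1 ⬝ᵥ q.2 := by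
  simp only [dotProduct, Pi.star_apply]
  exact continuous_finset_sum _ fun i _ =>
    (((continuous_apply i).comp continuous_fst).star).mul ((continuous_apply i).comp continuous_snd)

lemma compact_part (M : Matrix (Fin N) (Fin N) ℂ) (a : ℂ) :
    IsCompact {b : ℂ | IsDiagCompression M a b} := by
  classical
  set S : Set ((Fin N → ℂ) × (Fin N → ℂ)) :=
    {p | star p.1 ⬝ᵥ p.1 = 1 ∧ star p.2 ⬝ᵥ p.2 = 1 ∧ star p.1 ⬝ᵥ p.2 = 0 ∧
         star p.1 ⬝ᵥ M.mulVec p.1 = a ∧ star p.1 ⬝ᵥ M.mulVec p.2 = 0 ∧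
         star p.2 ⬝ᵥ M.mulVec p.1 = 0} with hS
  have hmv : Continuous fun v : Fin N → ℂ => M.mulVec v := by
    have := (Matrix.mulVecLin M).continuous_of_finiteDimensional
    exact this
  have hset : {b : ℂ | IsDiagCompression M a b} =
      (fun p : (Fin N → ℂ) × (Fin N → ℂ) => star p.2 ⬝ᵥ M.mulVec p.2) '' S := by
    ext b; constructor
    · rintro ⟨u, w, h1, h2, h3, h4, h5, h6, h7⟩
      exact ⟨(u, w), ⟨h1, h2, h3, h4, h6, h7⟩, h5⟩
    · rintro ⟨⟨u, w⟩, ⟨h1, h2, h3, h4, h6, h7⟩, rfl⟩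
      exact ⟨u, w, h1, h2, h3, h4, rfl, h6, h7⟩
  rw [hset]
  have hc : ∀ (f g : ((Fin N → ℂ) × (Fin N → ℂ)) → (Fin N → ℂ)),
      Continuous f → Continuous g →
      Continuous fun p : (Fin N → ℂ) × (Fin N → ℂ) => star (f p) ⬝ᵥ g p := by
    intro f g hf hg
    exact cont_dot.comp (hf.prodMk hg)
  have hSclosed : IsClosed S := by
    refine IsClosed.inter (isClosed_eq (hc _ _ continuous_fst continuous_fst) continuous_const)
      (IsClosed.inter (isClosed_eq (hc _ _ continuous_snd continuous_snd) continuous_const)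
      (IsClosed.inter (isClosed_eq (hc _ _ continuous_fst continuous_snd) continuous_const)
      (IsClosed.inter (isClosed_eq (hc _ _ continuous_fst (hmv.comp continuous_fst)) continuous_const)
      (IsClosed.inter (isClosed_eq (hc _ _ continuous_fst (hmv.comp continuous_snd)) continuous_const)
        (isClosed_eq (hc _ _ continuous_snd (hmv.comp continuous_fst)) continuous_const)))))
  have hSbdd : Bornology.IsBounded S := by
    refine Metric.isBounded_closedBall (x := (0 : (Fin N → ℂ) × (Fin N → ℂ))) (r := 1) |>.subset ?_
    intro p hp
    rw [Metric.mem_closedBall, dist_zero_right, Prod.norm_def]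
    exact max_le (norm_le_one_of_unit _ hp.1) (norm_le_one_of_unit _ hp.2.1)
  exact ((Metric.isCompact_of_isClosed_isBounded hSclosed hSbdd).image (hc _ _ continuous_snd (hmv.comp continuous_snd)))

lemma nonempty_part (hN : 4 ≤ N) (z : Fin N → ℂ) (a : ℂ)
    (ha : a ∈ convexHull ℝ (Set.range z)) :
    {b : ℂ | IsDiagCompression (Matrix.diagonal z) a b}.Nonempty := by
  classical
  -- extract convex combination
  rw [convexHull_range_eq_exists_affineCombination] at ha
  obtain ⟨s, wt, hwt0, hwt1, hco⟩ := ha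
  set t : Fin N → ℝ := fun i => if i ∈ s then wt i else 0 with ht
  have ht0 : ∀ i, 0 ≤ t i := by
    intro i; by_cases hi : i ∈ s
    · simp [ht, hi, hwt0 i hi]
    · simp [ht, hi]
  have ht1 : ∑ i, t i = 1 := by
    rw [← hwt1]
    simp [ht, Finset.sum_ite_mem]
  have hta : ∑ i, (t i : ℂ) * z i = a := by
    rw [← hco, affineCombination_eq_linear_combination s z wt hwt1]
    rw [← Finset.sum_subset (Finset.subset_univ s)
      (f := fun i => (t i : ℂ) * z i) (by intro i _ hi; simp [ht, hi])]
    refine Finset.sum_congr rfl fun i hi => ?_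
    simp [ht, hi, Complex.real_smul]
  -- build the vector u
  set u : Fin N → ℂ := fun i => (Real.sqrt (t i) : ℂ) with hu
  have huu : ∀ i, (starRingEnd ℂ) (u i) * u i = (t i : ℂ) := by
    intro i
    simp only [hu, Complex.conj_ofReal, ← Complex.ofReal_mul,
      Real.mul_self_sqrt (ht0 i)]
  have hu1 : star u ⬝ᵥ u = 1 := by
    rw [dot_expand]
    simp only [huu]
    rw [← Complex.ofReal_sum, ht1, Complex.ofReal_one]
  have hua : star u ⬝ᵥ (Matrix.diagonal z).mulVec u = a := by
    rw [diag_dot_expand, ← hta]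
    refine Finset.sum_congr rfl fun i _ => ?_
    have he : (starRingEnd ℂ) (u i) * (z i * u i)
        = ((starRingEnd ℂ) (u i) * u i) * z i := by ring
    rw [he, huu]
  -- the three linear constraints
  set g : Fin 3 → (Fin N → ℂ) :=
    ![u, fun i => (starRingEnd ℂ) (z i) * u i, fun i => z i * u i] with hg
  set L : (Fin N → ℂ) →ₗ[ℂ] (Fin 3 → ℂ) := LinearMap.pi fun k =>
    { toFun := fun w => star (g k) ⬝ᵥ w
      map_add' := fun x y => dotProduct_add _ x y
      map_smul' := fun c x => by simp [dotProduct_smul] } with hL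
  have hker : LinearMap.ker L ≠ ⊥ := by
    intro hbot
    have h1 := LinearMap.finrank_range_add_finrank_ker L
    rw [hbot, finrank_bot] at h1
    have h2 : Module.finrank ℂ (LinearMap.range L) ≤ 3 := by
      refine le_trans (Submodule.finrank_le _) ?_
      simp [Module.finrank_pi]
    rw [Module.finrank_pi] at h1
    simp only [Fintype.card_fin, add_zero] at h1
    omega
  obtain ⟨w0, hw0mem, hw0ne⟩ := Submodule.exists_mem_ne_zero_of_ne_bot hker
  have hLw : ∀ k, star (g k) ⬝ᵥ w0 = 0 := by
    intro k
    have : L w0 = 0 := hw0mem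
    exact congrFun this k
  have hd0 : star u ⬝ᵥ w0 = 0 := hLw 0
  have hd1 : (∑ i, z i * ((starRingEnd ℂ) (u i)) * w0 i) = 0 := by
    have := hLw 1
    rw [dot_expand] at this
    rw [← this]
    refine Finset.sum_congr rfl fun i _ => ?_
    simp [hg]
  have hd2 : (∑ i, (starRingEnd ℂ) (z i * u i) * w0 i) = 0 := by
    have := hLw 2
    rw [dot_expand] at this
    rw [← this]
    refine Finset.sum_congr rfl fun i _ => ?_
    simp [hg]
  -- normalize w0
  set s0 : ℝ := ∑ i, Complex.normSq (w0 i) with hs0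
  have hs0pos : 0 < s0 := by
    obtain ⟨i, hi⟩ := Function.ne_iff.1 hw0ne
    refine Finset.sum_pos' (fun j _ => Complex.normSq_nonneg _) ⟨i, Finset.mem_univ i, ?_⟩
    simpa [Complex.normSq_pos] using hi
  set c : ℝ := (Real.sqrt s0)⁻¹ with hc
  set w : Fin N → ℂ := (c : ℂ) • w0 with hw
  have hdotsmul : ∀ v : Fin N → ℂ, star v ⬝ᵥ w = (c : ℂ) * (star v ⬝ᵥ w0) := by
    intro v
    rw [hw, dotProduct_smul]; simp
  have hw00 : star w0 ⬝ᵥ w0 = (s0 : ℂ) := by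
    rw [dot_expand, hs0]
    push_cast
    refine Finset.sum_congr rfl fun i _ => ?_
    rw [mul_comm, Complex.mul_conj]
  have hcc : Real.sqrt s0 * Real.sqrt s0 = s0 := Real.mul_self_sqrt hs0pos.le
  have hcne : Real.sqrt s0 ≠ 0 := by positivity
  have hw1 : star w ⬝ᵥ w = 1 := by
    have he : star w ⬝ᵥ w = (c : ℂ) * ((c : ℂ) * (star w0 ⬝ᵥ w0)) := by
      rw [hw, star_smul, smul_dotProduct, dotProduct_smul]
      simp [Complex.star_def, Complex.conj_ofReal, smul_eq_mul]
    rw [he, hw00, ← Complex.ofReal_mul, ← Complex.ofReal_mul]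
    have hr : c * (c * s0) = 1 := by
      rw [hc, ← hcc]; field_simp
      rw [Real.sqrt_sq (Real.sqrt_nonneg _)]
    rw [hr, Complex.ofReal_one]
  have huw : star u ⬝ᵥ w = 0 := by rw [hdotsmul, hd0, mul_zero]
  have huMw : star u ⬝ᵥ (Matrix.diagonal z).mulVec w = 0 := by
    rw [hw, Matrix.mulVec_smul, dotProduct_smul]
    have h0 : star u ⬝ᵥ (Matrix.diagonal z).mulVec w0 = 0 := by
      rw [diag_dot_expand, ← hd1]
      refine Finset.sum_congr rfl fun i _ => ?_; ring
    simp [h0]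
  have hwMu : star w ⬝ᵥ (Matrix.diagonal z).mulVec u = 0 := by
    have hd2' : star w0 ⬝ᵥ (Matrix.diagonal z).mulVec u = 0 := by
      have h := congrArg (starRingEnd ℂ) hd2
      rw [map_sum, map_zero] at h
      rw [diag_dot_expand, ← h]
      refine Finset.sum_congr rfl fun i _ => ?_
      simp [_root_.map_mul]; ring
    rw [hw, star_smul, smul_dotProduct]
    simp [Complex.star_def, Complex.conj_ofReal, hd2']
  exact ⟨star w ⬝ᵥ (Matrix.diagonal z).mulVec w,
    u, w, hu1, hw1, huw, hua, rfl, huMw, hwMu⟩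

/-- 2D cross product of complex numbers viewed as plane vectors. -/
def cross2 (p q : ℂ) : ℝ := p.re * q.im - p.im * q.re

theorem stmt_14 {N : ℕ} (hN : 4 ≤ N) (z : Fin N → ℂ)
    (hz : ∀ i j k : Fin N, i ≠ j → i ≠ k → j ≠ k → AffineIndependent ℝ ![z i, z j, z k])
    (a : ℂ) (ha : a ∈ convexHull ℝ (Set.range z)) :
    {b : ℂ | IsDiagCompression (Matrix.diagonal z) a b}.Nonempty ∧
      IsCompact {b : ℂ | IsDiagCompression (Matrix.diagonal z) a b} :=
  ⟨nonempty_part hN z a ha, compact_part _ a⟩
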